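/- arXiv:1708.08620 — 3 statements merged into one kernel-verified Lean document; each statement's English description precedes it below -/
import Mathlib

section
/- There is a numerical constant c > 0 with the following property. Let X be a centered real random variable and K_n > 0. If Var( e^{θX/2} ) ≤ (θ²/4) · K_n · E[ e^{θX} ] for every 0 < θ < 1/(2√K_n), then P( X ≥ t√K_n ) ≤ 3 e^{−c t} for every t ≥ 0. -/
open MeasureTheory ProbabilityTheory

set_option maxHeartbeats 1000000

/-- Pointwise domination used for dominated convergence. -/
lemma stmt6_aux_dom (x : ℝ) {s θ : ℝ} (hs : 0 < s) (hsθ : s ≤ θ) :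
    |Real.exp (s * x) - 1| ≤ s / θ * (|Real.exp (θ * x) - 1| + θ * |x|) := by
  have hθ : 0 < θ := hs.trans_le hsθ
  have hub : Real.exp (s * x) - 1 ≤ s / θ * (Real.exp (θ * x) - 1) := by
    have ha : (0:ℝ) ≤ s / θ := by positivity
    have hb : (0:ℝ) ≤ 1 - s / θ := by
      rw [sub_nonneg]; exact div_le_one_of_le₀ hsθ hθ.le
    have hab : s / θ + (1 - s / θ) = 1 := by ring
    have h := convexOn_exp.2 (Set.mem_univ (θ * x)) (Set.mem_univ (0 : ℝ)) ha hb hab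
    have hco : (s / θ) • (θ * x) + (1 - s / θ) • (0 : ℝ) = s * x := by
      rw [smul_eq_mul, smul_eq_mul, mul_zero, add_zero]
      field_simp
    rw [hco] at h
    simp only [smul_eq_mul, Real.exp_zero] at h
    nlinarith
  have hlb : s * x ≤ Real.exp (s * x) - 1 := by
    linarith [Real.add_one_le_exp (s * x)]
  have hd : (0:ℝ) ≤ s / θ := by positivity
  have hcancel : s / θ * θ = s := div_mul_cancel₀ s hθ.ne'
  have h3 : s * |x| ≤ s / θ * (|Real.exp (θ * x) - 1| + θ * |x|) := by
    have h5 : θ * |x| ≤ |Real.exp (θ * x) - 1| + θ * |x| :=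
      le_add_of_nonneg_left (abs_nonneg _)
    have h6 := mul_le_mul_of_nonneg_left h5 hd
    calc s * |x| = s / θ * (θ * |x|) := by rw [← mul_assoc, hcancel]
      _ ≤ _ := h6
  rw [abs_le]
  constructor
  · have h1 : -(s * |x|) ≤ s * x := by nlinarith [neg_abs_le x]
    linarith
  · have h7 : Real.exp (θ * x) - 1 ≤ |Real.exp (θ * x) - 1| + θ * |x| := by
      have := le_abs_self (Real.exp (θ * x) - 1)
      nlinarith [abs_nonneg x]
    have h8 := mul_le_mul_of_nonneg_left h7 hd
    linarith

lemma stmt6_aux_frac {a : ℝ} (h0 : 0 ≤ a) (h : a ≤ 1/16) : a ≤ 16/15 * a * (1 - a) := by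
  nlinarith

/-- Lemma 2.1: an exponential-moment variance bound implies an exponential
deviation inequality. -/
theorem stmt_6 :
    ∃ c : ℝ, 0 < c ∧
      ∀ (Ω : Type) (_ : MeasurableSpace Ω) (P : Measure Ω), IsProbabilityMeasure P →
      ∀ (X : Ω → ℝ), Measurable X → Integrable X P → (∫ ω, X ω ∂P) = 0 →
      ∀ (Kn : ℝ), 0 < Kn →
      (∀ θ : ℝ, 0 < θ → θ < 1 / (2 * Real.sqrt Kn) →
        Integrable (fun ω => Real.exp (θ * X ω)) P) →
      (∀ θ : ℝ, 0 < θ → θ < 1 / (2 * Real.sqrt Kn) →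
        variance (fun ω => Real.exp (θ * X ω / 2)) P ≤
          θ ^ 2 / 4 * Kn * ∫ ω, Real.exp (θ * X ω) ∂P) →
      ∀ t : ℝ, 0 ≤ t →
      P {ω | X ω ≥ t * Real.sqrt Kn} ≤ ENNReal.ofReal (3 * Real.exp (-c * t)) := by
  refine ⟨1/4, by norm_num, ?_⟩
  intro Ω mΩ P hP X hXm hXint hX0 Kn hKn hInt hVar t ht
  have hsK : 0 < Real.sqrt Kn := Real.sqrt_pos.2 hKn
  have hKsq : Real.sqrt Kn ^ 2 = Kn := Real.sq_sqrt hKn.le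
  set s0 : ℝ := 1 / (2 * Real.sqrt Kn) with hs0def
  have hs0pos : 0 < s0 := by positivity
  set θ : ℝ := 1 / (4 * Real.sqrt Kn) with hθdef
  have hθpos : 0 < θ := by positivity
  have hθlt : θ < s0 := by
    rw [hθdef, hs0def]
    apply one_div_lt_one_div_of_lt <;> nlinarith
  -- positivity of the mgf
  have hLpos : ∀ s : ℝ, 0 < s → s < s0 → 0 < mgf X P s := fun s h1 h2 =>
    mgf_pos (hInt s h1 h2)
  have hmgf_eq : ∀ s : ℝ, mgf X P s = ∫ ω, Real.exp (s * X ω) ∂P := fun s => rfl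
  -- step inequality
  have step : ∀ s : ℝ, 0 < s → s < s0 →
      mgf X P s * (1 - s ^ 2 * Kn / 4) ≤ (mgf X P (s / 2)) ^ 2 := by
    intro s h1 h2
    have h1' : 0 < s / 2 := by linarith
    have h2' : s / 2 < s0 := by linarith
    have hIs : Integrable (fun ω => Real.exp (s * X ω)) P := hInt s h1 h2
    have hIs2 : Integrable (fun ω => Real.exp (s / 2 * X ω)) P := hInt _ h1' h2'
    have heq : ∀ ω, Real.exp (s * X ω / 2) = Real.exp (s / 2 * X ω) := by
      intro ω; ring_nf
    have hsq : ∀ ω, Real.exp (s * X ω / 2) ^ 2 = Real.exp (s * X ω) := by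
      intro ω; rw [sq, ← Real.exp_add]; ring_nf
    have hmem : MemLp (fun ω => Real.exp (s * X ω / 2)) 2 P := by
      rw [memLp_two_iff_integrable_sq]
      · exact hIs.congr (by
          filter_upwards with ω
          exact (hsq ω).symm)
      · exact (Real.measurable_exp.comp ((hXm.const_mul s).div_const 2)).aestronglyMeasurable
    have hvar := variance_eq_sub hmem
    have hv := hVar s h1 h2
    have hI1 : (∫ ω, (fun ω => Real.exp (s * X ω / 2)) ω ^ 2 ∂P)
        = mgf X P s := by
      rw [hmgf_eq]
      exact integral_congr_ae (by filter_upwards with ω; exact hsq ω)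
    have hI2 : (∫ ω, Real.exp (s * X ω / 2) ∂P) = mgf X P (s / 2) := by
      rw [hmgf_eq]
      exact integral_congr_ae (by filter_upwards with ω; exact heq ω)
    rw [← hmgf_eq] at hv
    have hvar' : variance (fun ω => Real.exp (s * X ω / 2)) P
        = mgf X P s - (mgf X P (s / 2)) ^ 2 := by
      rw [hvar, ← hI1, ← hI2]
      congr 1
    rw [hvar'] at hv
    nlinarith
  -- small-x bound: s^2 Kn < 1/4 for s < s0
  have hxsmall : ∀ s : ℝ, 0 < s → s < s0 → s ^ 2 * Kn ≤ 1 / 4 := by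
    intro s h1 h2
    rw [hs0def, lt_div_iff₀ (by positivity : (0:ℝ) < 2 * Real.sqrt Kn)] at h2
    have hkey : (s * Real.sqrt Kn) ^ 2 ≤ 1 / 4 := by
      nlinarith [mul_nonneg h1.le hsK.le]
    calc s ^ 2 * Kn = (s * Real.sqrt Kn) ^ 2 := by rw [mul_pow, hKsq]
      _ ≤ 1 / 4 := hkey
  -- logarithmic step
  have logstep : ∀ s : ℝ, 0 < s → s < s0 →
      Real.log (mgf X P s) ≤ 2 * Real.log (mgf X P (s / 2)) + (4 * Kn / 15) * s ^ 2 := by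
    intro s h1 h2
    have h1' : 0 < s / 2 := by linarith
    have h2' : s / 2 < s0 := by linarith
    have hx : s ^ 2 * Kn / 4 ≤ 1 / 16 := by linarith [hxsmall s h1 h2]
    have hx0 : 0 ≤ s ^ 2 * Kn / 4 := by positivity
    have h1x : (15:ℝ)/16 ≤ 1 - s ^ 2 * Kn / 4 := by linarith
    have hLs := hLpos s h1 h2
    have hLs2 := hLpos _ h1' h2'
    have hle : mgf X P s ≤ (mgf X P (s / 2)) ^ 2 / (1 - s ^ 2 * Kn / 4) := by
      rw [le_div_iff₀ (by linarith)]
      have := step s h1 h2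
      nlinarith
    have hlog := Real.log_le_log hLs hle
    rw [Real.log_div (by positivity) (by linarith), Real.log_pow] at hlog
    have hloginv : -Real.log (1 - s ^ 2 * Kn / 4) ≤ (16/15) * (s ^ 2 * Kn / 4) := by
      rw [← Real.log_inv]
      have h := Real.log_le_sub_one_of_pos (x := (1 - s ^ 2 * Kn / 4)⁻¹) (by positivity)
      have hpos1 : (0:ℝ) < 1 - s ^ 2 * Kn / 4 := by linarith
      have hinv : (1 - s ^ 2 * Kn / 4)⁻¹ - 1 = (s ^ 2 * Kn / 4) / (1 - s ^ 2 * Kn / 4) := by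
        rw [inv_eq_one_div, div_sub' hpos1.ne']
        congr 1
        ring
      rw [hinv] at h
      refine h.trans ?_
      rw [div_le_iff₀ hpos1]
      have := stmt6_aux_frac hx0 hx
      linarith
    push_cast at hlog
    nlinarith
  -- iteration
  have hθn : ∀ n : ℕ, 0 < θ / 2 ^ n ∧ θ / 2 ^ n < s0 := by
    intro n
    have h2n : (1:ℝ) ≤ 2 ^ n := one_le_pow₀ (by norm_num : (1:ℝ) ≤ 2)
    constructor
    · positivity
    · exact (div_le_self hθpos.le h2n).trans_lt hθlt
  have iter : ∀ n : ℕ, Real.log (mgf X P θ) ≤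
      2 ^ n * Real.log (mgf X P (θ / 2 ^ n)) + (4 * Kn / 15) * θ ^ 2 * (2 - 2 * (1/2) ^ n) := by
    intro n
    induction n with
    | zero => simp
    | succ n ih =>
      obtain ⟨hp, hlt⟩ := hθn n
      have hstep := logstep _ hp hlt
      have hdiv : θ / 2 ^ n / 2 = θ / 2 ^ (n + 1) := by
        rw [div_div, pow_succ]
      rw [hdiv] at hstep
      have h2n : (0:ℝ) < 2 ^ n := by positivity
      have hmul := mul_le_mul_of_nonneg_left hstep h2n.le
      have hpow : (2:ℝ) ^ n * ((4 * Kn / 15) * (θ / 2 ^ n) ^ 2)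
          = (4 * Kn / 15) * θ ^ 2 * (1/2) ^ n := by
        have h2n0 : ((2:ℝ) ^ n) ≠ 0 := by positivity
        field_simp
        rw [← mul_pow]; norm_num
      have hpow2 : (2:ℝ) ^ (n + 1) = 2 * 2 ^ n := by ring
      have hhalf : ((1:ℝ)/2) ^ (n + 1) = (1/2) ^ n / 2 := by ring
      calc Real.log (mgf X P θ)
          ≤ 2 ^ n * Real.log (mgf X P (θ / 2 ^ n))
            + (4 * Kn / 15) * θ ^ 2 * (2 - 2 * (1/2) ^ n) := ih
        _ ≤ 2 ^ n * (2 * Real.log (mgf X P (θ / 2 ^ (n+1))) + (4 * Kn / 15) * (θ / 2 ^ n) ^ 2)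
            + (4 * Kn / 15) * θ ^ 2 * (2 - 2 * (1/2) ^ n) := add_le_add_left hmul _
        _ = 2 ^ (n+1) * Real.log (mgf X P (θ / 2 ^ (n+1)))
            + (4 * Kn / 15) * θ ^ 2 * (2 - 2 * (1/2) ^ (n+1)) := by
            rw [mul_add, hpow, hpow2, hhalf]; ring
  -- key inequality for the limit
  have key : ∀ n : ℕ, Real.log (mgf X P θ) - (8 * Kn / 15) * θ ^ 2
      ≤ 2 ^ n * (mgf X P (θ / 2 ^ n) - 1) := by
    intro n
    obtain ⟨hp, hlt⟩ := hθn n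
    have hlog1 : Real.log (mgf X P (θ / 2 ^ n)) ≤ mgf X P (θ / 2 ^ n) - 1 :=
      Real.log_le_sub_one_of_pos (hLpos _ hp hlt)
    have h2n : (0:ℝ) ≤ 2 ^ n := by positivity
    have hhalf : (0:ℝ) ≤ (1/2:ℝ) ^ n := by positivity
    have hB : (0:ℝ) ≤ (4 * Kn / 15) * θ ^ 2 := by positivity
    have := iter n
    nlinarith [mul_le_mul_of_nonneg_left hlog1 h2n]
  -- the sequence tends to 0
  have hF : Filter.Tendsto (fun n : ℕ => 2 ^ n * (mgf X P (θ / 2 ^ n) - 1))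
      Filter.atTop (nhds 0) := by
    have hInteg : ∀ n : ℕ, Integrable (fun ω => 2 ^ n * (Real.exp (θ / 2 ^ n * X ω) - 1)) P := by
      intro n
      obtain ⟨hp, hlt⟩ := hθn n
      exact (((hInt _ hp hlt).sub (integrable_const 1)).const_mul _)
    have hrw : ∀ n : ℕ, (∫ ω, 2 ^ n * (Real.exp (θ / 2 ^ n * X ω) - 1) ∂P)
        = 2 ^ n * (mgf X P (θ / 2 ^ n) - 1) := by
      intro n
      obtain ⟨hp, hlt⟩ := hθn n
      rw [integral_const_mul, integral_sub (hInt _ hp hlt) (integrable_const 1),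
        integral_const, probReal_univ]
      simp [hmgf_eq]
    have hlim : Filter.Tendsto (fun n : ℕ => ∫ ω, 2 ^ n * (Real.exp (θ / 2 ^ n * X ω) - 1) ∂P)
        Filter.atTop (nhds (∫ ω, θ * X ω ∂P)) := by
      apply tendsto_integral_of_dominated_convergence
        (fun ω => |Real.exp (θ * X ω) - 1| + θ * |X ω|)
      · intro n
        exact (((Real.measurable_exp.comp (hXm.const_mul _)).sub measurable_const).const_mul
          _).aestronglyMeasurable
      · apply Integrable.add
        · exact ((hInt θ hθpos hθlt).sub (integrable_const 1)).abs
        · exact (hXint.abs.const_mul θ)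
      · intro n
        filter_upwards with ω
        obtain ⟨hp, hlt⟩ := hθn n
        have hsle : θ / 2 ^ n ≤ θ :=
          div_le_self hθpos.le (one_le_pow₀ (by norm_num : (1:ℝ) ≤ 2))
        have hdom := stmt6_aux_dom (X ω) hp hsle
        have hcoef : (θ / 2 ^ n) / θ = 1 / 2 ^ n := by
          rw [div_right_comm, div_self hθpos.ne']
        rw [hcoef] at hdom
        have h2n : (0:ℝ) < 2 ^ n := by positivity
        calc ‖2 ^ n * (Real.exp (θ / 2 ^ n * X ω) - 1)‖
            = 2 ^ n * |Real.exp (θ / 2 ^ n * X ω) - 1| := by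
              rw [norm_mul, Real.norm_eq_abs, Real.norm_eq_abs, abs_of_pos h2n]
          _ ≤ 2 ^ n * (1 / 2 ^ n * (|Real.exp (θ * X ω) - 1| + θ * |X ω|)) := by
              apply mul_le_mul_of_nonneg_left hdom h2n.le
          _ = |Real.exp (θ * X ω) - 1| + θ * |X ω| := by
              rw [← mul_assoc, mul_one_div, div_self h2n.ne', one_mul]
      · filter_upwards with ω
        have hderiv : HasDerivAt (fun h : ℝ => Real.exp (h * X ω)) (X ω) 0 := by
          have := ((hasDerivAt_id (0:ℝ)).mul_const (X ω)).exp
          simpa using this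
        rw [hasDerivAt_iff_tendsto_slope] at hderiv
        have h0seq : Filter.Tendsto (fun n : ℕ => θ / 2 ^ n) Filter.atTop (nhds 0) := by
          have hhalf : Filter.Tendsto (fun n : ℕ => θ * (1/2 : ℝ) ^ n) Filter.atTop
              (nhds (θ * 0)) :=
            (tendsto_pow_atTop_nhds_zero_of_lt_one (by norm_num) (by norm_num)).const_mul θ
          rw [mul_zero] at hhalf
          refine hhalf.congr (fun n => ?_)
          rw [one_div, inv_pow, ← div_eq_mul_inv]
        have hseq : Filter.Tendsto (fun n : ℕ => θ / 2 ^ n) Filter.atTop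
            (nhdsWithin 0 {(0:ℝ)}ᶜ) := by
          apply tendsto_nhdsWithin_of_tendsto_nhds_of_eventually_within _ h0seq
          filter_upwards with n
          have : (0:ℝ) < θ / 2 ^ n := by positivity
          simpa using this.ne'
        have hcomp := (hderiv.comp hseq).const_mul θ
        refine hcomp.congr' ?_ |>.mono_right (by rw [mul_comm])
        filter_upwards with n
        have h2n : (0:ℝ) < 2 ^ n := by positivity
        have hne : θ / 2 ^ n ≠ 0 := by positivity
        simp only [Function.comp_apply, slope_def_field]
        have hθne : θ ≠ 0 := hθpos.ne'
        simp only [zero_mul, Real.exp_zero, sub_zero]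
        field_simp
    have hint0 : (∫ ω, θ * X ω ∂P) = 0 := by
      rw [integral_const_mul, hX0, mul_zero]
    rw [hint0] at hlim
    exact hlim.congr hrw
  -- conclude the mgf bound
  have hc0 : Real.log (mgf X P θ) - (8 * Kn / 15) * θ ^ 2 ≤ 0 := ge_of_tendsto' hF key
  have hθsq : θ ^ 2 = 1 / (16 * Kn) := by
    rw [hθdef, div_pow, one_pow, mul_pow, hKsq]
    norm_num
  have hlogb : Real.log (mgf X P θ) ≤ 1/30 := by
    rw [hθsq] at hc0
    have : (8 * Kn / 15) * (1 / (16 * Kn)) = 1/30 := by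
      field_simp
      ring
    linarith [this ▸ hc0]
  have hmgfb : mgf X P θ ≤ Real.exp (1/30) := by
    calc mgf X P θ = Real.exp (Real.log (mgf X P θ)) :=
          (Real.exp_log (hLpos θ hθpos hθlt)).symm
      _ ≤ Real.exp (1/30) := Real.exp_le_exp.2 hlogb
  have h3 : Real.exp (1/30 : ℝ) ≤ 3 := by
    have h1 : Real.exp (1/30 : ℝ) ≤ Real.exp 1 := Real.exp_le_exp.2 (by norm_num)
    have := Real.exp_one_lt_d9
    linarith
  -- Chernoff bound
  have hch := measure_ge_le_exp_mul_mgf (μ := P) (X := X) (t := θ) (t * Real.sqrt Kn)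
    hθpos.le (hInt θ hθpos hθlt)
  have hexp : -θ * (t * Real.sqrt Kn) = -(1/4) * t := by
    rw [hθdef]
    field_simp
  rw [hexp] at hch
  have hreal : (P {ω | t * Real.sqrt Kn ≤ X ω}).toReal ≤ 3 * Real.exp (-(1/4) * t) := by
    have hep : 0 < Real.exp (-(1/4) * t) := Real.exp_pos _
    calc (P {ω | t * Real.sqrt Kn ≤ X ω}).toReal
        ≤ Real.exp (-(1/4) * t) * mgf X P θ := hch
      _ ≤ Real.exp (-(1/4) * t) * 3 := by nlinarith
      _ = 3 * Real.exp (-(1/4) * t) := by ring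
  have hset : {ω | X ω ≥ t * Real.sqrt Kn} = {ω | t * Real.sqrt Kn ≤ X ω} := rfl
  rw [hset]
  calc P {ω | t * Real.sqrt Kn ≤ X ω}
      = ENNReal.ofReal (P {ω | t * Real.sqrt Kn ≤ X ω}).toReal :=
        (ENNReal.ofReal_toReal (measure_ne_top _ _)).symm
    _ ≤ ENNReal.ofReal (3 * Real.exp (-(1/4) * t)) := ENNReal.ofReal_le_ofReal hreal
end

section
/- (Harris' negative association inequality.) Let X₁,…,Xₙ be independent real random variables and X = (X₁,…,Xₙ). Let f : ℝⁿ → ℝ be nondecreasing in each coordinate (the others being fixed) and g : ℝⁿ → ℝ be nonincreasing in each coordinate, with f(X), g(X) and f(X)g(X) integrable. Then E[ f(X) g(X) ] ≤ E[ f(X) ] · E[ g(X) ]. -/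
open MeasureTheory ProbabilityTheory

private lemma integrable_of_bdd {α : Type*} [MeasurableSpace α] {μ : Measure α}
    [IsFiniteMeasure μ] {φ : α → ℝ} {C : ℝ} (hm : AEStronglyMeasurable φ μ)
    (hb : ∀ x, |φ x| ≤ C) : Integrable φ μ :=
  Integrable.mono' (integrable_const C) hm (Filter.Eventually.of_forall fun x => by
    simpa [Real.norm_eq_abs] using hb x)

private lemma oneDim (ν : Measure ℝ) [IsProbabilityMeasure ν]
    (F G : ℝ → ℝ) (hF : Monotone F) (hG : Antitone G) (hFm : Measurable F) (hGm : Measurable G)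
    {C : ℝ} (hFb : ∀ x, |F x| ≤ C) (hGb : ∀ x, |G x| ≤ C) :
    ∫ x, F x * G x ∂ν ≤ (∫ x, F x ∂ν) * ∫ x, G x ∂ν := by
  have key : ∀ p : ℝ × ℝ, 0 ≤ (F p.1 - F p.2) * (G p.2 - G p.1) := by
    rintro ⟨x, y⟩
    rcases le_total x y with h | h
    · have h1 := hF h; have h2 := hG h; dsimp only; nlinarith
    · have h1 := hF h; have h2 := hG h; dsimp only; nlinarith
  set π := ν.prod ν with hπ
  have hC2 : ∀ (A B : ℝ → ℝ), (∀ x, |A x| ≤ C) → (∀ x, |B x| ≤ C) →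
      ∀ p : ℝ × ℝ, |A p.1 * B p.2| ≤ C * C := by
    intro A B hA hB p
    rw [abs_mul]
    exact mul_le_mul (hA _) (hB _) (abs_nonneg _) ((abs_nonneg _).trans (hA p.1))
  have i1 : Integrable (fun p : ℝ × ℝ => F p.1 * G p.2) π :=
    integrable_of_bdd (Measurable.aestronglyMeasurable
      ((hFm.comp measurable_fst).mul (hGm.comp measurable_snd))) (hC2 F G hFb hGb)
  have i2 : Integrable (fun p : ℝ × ℝ => F p.2 * G p.1) π :=
    integrable_of_bdd (Measurable.aestronglyMeasurable
      ((hFm.comp measurable_snd).mul (hGm.comp measurable_fst))) fun p => by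
        have := hC2 G F hGb hFb p
        simpa [abs_mul, mul_comm] using this
  have i3 : Integrable (fun p : ℝ × ℝ => F p.1 * G p.1) π :=
    integrable_of_bdd (Measurable.aestronglyMeasurable
      ((hFm.comp measurable_fst).mul (hGm.comp measurable_fst)))
      fun p => hC2 F G hFb hGb (p.1, p.1)
  have i4 : Integrable (fun p : ℝ × ℝ => F p.2 * G p.2) π :=
    integrable_of_bdd (Measurable.aestronglyMeasurable
      ((hFm.comp measurable_snd).mul (hGm.comp measurable_snd)))
      fun p => hC2 F G hFb hGb (p.2, p.2)
  have h0 : 0 ≤ ∫ p : ℝ × ℝ, (F p.1 - F p.2) * (G p.2 - G p.1) ∂π :=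
    integral_nonneg key
  have hexp : ∫ p : ℝ × ℝ, (F p.1 - F p.2) * (G p.2 - G p.1) ∂π =
      ((∫ p : ℝ × ℝ, F p.1 * G p.2 ∂π) + ∫ p : ℝ × ℝ, F p.2 * G p.1 ∂π) -
      ((∫ p : ℝ × ℝ, F p.1 * G p.1 ∂π) + ∫ p : ℝ × ℝ, F p.2 * G p.2 ∂π) := by
    calc ∫ p : ℝ × ℝ, (F p.1 - F p.2) * (G p.2 - G p.1) ∂π
        = ∫ p : ℝ × ℝ, (F p.1 * G p.2 + F p.2 * G p.1) -
            (F p.1 * G p.1 + F p.2 * G p.2) ∂π := by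
          apply integral_congr_ae; filter_upwards with p; ring
      _ = (∫ p : ℝ × ℝ, F p.1 * G p.2 + F p.2 * G p.1 ∂π) -
            ∫ p : ℝ × ℝ, F p.1 * G p.1 + F p.2 * G p.2 ∂π :=
          integral_sub (i1.add i2) (i3.add i4)
      _ = _ := by rw [integral_add i1 i2, integral_add i3 i4]
  rw [hexp] at h0
  have e1 : ∫ p : ℝ × ℝ, F p.1 * G p.2 ∂π = (∫ x, F x ∂ν) * ∫ x, G x ∂ν :=
    integral_prod_mul F G
  have e2 : ∫ p : ℝ × ℝ, F p.2 * G p.1 ∂π = (∫ x, F x ∂ν) * ∫ x, G x ∂ν := by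
    have := integral_prod_mul (μ := ν) (ν := ν) G F
    calc ∫ p : ℝ × ℝ, F p.2 * G p.1 ∂π = ∫ p : ℝ × ℝ, G p.1 * F p.2 ∂π := by
          simp_rw [mul_comm]
      _ = (∫ x, F x ∂ν) * ∫ x, G x ∂ν := by rw [this, mul_comm]
  have e3 : ∫ p : ℝ × ℝ, F p.1 * G p.1 ∂π = ∫ x, F x * G x ∂ν := by
    have := integral_prod_mul (μ := ν) (ν := ν) (fun x => F x * G x) (fun _ => (1 : ℝ))
    simpa using this
  have e4 : ∫ p : ℝ × ℝ, F p.2 * G p.2 ∂π = ∫ x, F x * G x ∂ν := by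
    have := integral_prod_mul (μ := ν) (ν := ν) (fun _ => (1 : ℝ)) (fun x => F x * G x)
    simpa using this
  rw [e1, e2, e3, e4] at h0
  linarith
private lemma measurable_cons {n : ℕ} (t : ℝ) :
    Measurable (fun z : Fin n → ℝ => (Fin.cons t z : Fin (n + 1) → ℝ)) := by
  apply measurable_pi_iff.mpr
  intro j
  refine Fin.cases ?_ ?_ j
  · simpa using measurable_const
  · intro k; simpa using measurable_pi_apply k

private lemma cons_mono {n : ℕ} {t t' : ℝ} (ht : t ≤ t') {z z' : Fin n → ℝ} (hz : z ≤ z') :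
    (Fin.cons t z : Fin (n + 1) → ℝ) ≤ Fin.cons t' z' := by
  intro j
  refine Fin.cases ?_ ?_ j
  · simpa using ht
  · intro k; simpa using hz k

private theorem harris_pi : ∀ (n : ℕ) (μ : Fin n → Measure ℝ),
    (∀ i, IsProbabilityMeasure (μ i)) →
    ∀ (f g : (Fin n → ℝ) → ℝ), Monotone f → Antitone g → Measurable f → Measurable g →
    ∀ C : ℝ, (∀ x, |f x| ≤ C) → (∀ x, |g x| ≤ C) →
    ∫ x, f x * g x ∂(Measure.pi μ) ≤
      (∫ x, f x ∂(Measure.pi μ)) * ∫ x, g x ∂(Measure.pi μ) := by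
  intro n
  induction n with
  | zero =>
    intro μ hP f g hf hg hfm hgm C hfb hgb
    haveI := hP
    haveI : IsProbabilityMeasure (Measure.pi μ) := inferInstance
    set c : Fin 0 → ℝ := fun i => i.elim0 with hc
    have hfc : ∀ x : Fin 0 → ℝ, f x = f c := fun x => congrArg f (Subsingleton.elim x c)
    have hgc : ∀ x : Fin 0 → ℝ, g x = g c := fun x => congrArg g (Subsingleton.elim x c)
    have e1 : (fun x : Fin 0 → ℝ => f x * g x) = fun _ => f c * g c := by
      funext x; rw [hfc x, hgc x]
    have e2 : (fun x : Fin 0 → ℝ => f x) = fun _ => f c := by funext x; rw [hfc x]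
    have e3 : (fun x : Fin 0 → ℝ => g x) = fun _ => g c := by funext x; rw [hgc x]
    rw [e1, e2, e3, integral_const, integral_const, integral_const]
    simp
  | succ n ih =>
    intro μ hP f g hf hg hfm hgm C hfb hgb
    haveI := hP
    set ν : Fin n → Measure ℝ := fun j => μ ((0 : Fin (n + 1)).succAbove j) with hν
    haveI hPν : ∀ j, IsProbabilityMeasure (ν j) := fun j => hP _
    haveI : IsProbabilityMeasure (Measure.pi ν) := inferInstance
    haveI : IsProbabilityMeasure (Measure.pi μ) := inferInstance
    set e := MeasurableEquiv.piFinSuccAbove (fun _ : Fin (n + 1) => ℝ) 0 with he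
    have mp : MeasurePreserving (⇑e) (Measure.pi μ) ((μ 0).prod (Measure.pi ν)) :=
      measurePreserving_piFinSuccAbove μ 0
    have mps : MeasurePreserving (⇑e.symm) ((μ 0).prod (Measure.pi ν)) (Measure.pi μ) :=
      mp.symm e
    have hes : ∀ p : ℝ × (Fin n → ℝ), e.symm p = Fin.cons p.1 p.2 := by
      intro p
      show (Fin.insertNthEquiv (fun _ : Fin (n+1) => ℝ) 0) p = Fin.cons p.1 p.2
      simp [Fin.insertNthEquiv, Fin.insertNth_zero']
    -- transfer any integral
    have htrans : ∀ φ : (Fin (n + 1) → ℝ) → ℝ,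
        ∫ x, φ x ∂(Measure.pi μ) =
          ∫ p, φ (Fin.cons p.1 p.2) ∂((μ 0).prod (Measure.pi ν)) := by
      intro φ
      rw [← mps.integral_comp e.symm.measurableEmbedding]
      congr 1; funext p; rw [hes]
    -- sections
    have hsecm : ∀ (φ : (Fin (n + 1) → ℝ) → ℝ), Measurable φ → ∀ t : ℝ,
        Measurable (fun z : Fin n → ℝ => φ (Fin.cons t z)) := fun φ hφ t =>
      hφ.comp (measurable_cons t)
    set F : ℝ → ℝ := fun t => ∫ z, f (Fin.cons t z) ∂(Measure.pi ν) with hF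
    set G : ℝ → ℝ := fun t => ∫ z, g (Fin.cons t z) ∂(Measure.pi ν) with hG
    have hintf : ∀ t, Integrable (fun z => f (Fin.cons t z)) (Measure.pi ν) := fun t =>
      integrable_of_bdd (hsecm f hfm t).aestronglyMeasurable (fun z => hfb _)
    have hintg : ∀ t, Integrable (fun z => g (Fin.cons t z)) (Measure.pi ν) := fun t =>
      integrable_of_bdd (hsecm g hgm t).aestronglyMeasurable (fun z => hgb _)
    have hFmono : Monotone F := by
      intro t t' h
      exact integral_mono (hintf t) (hintf t') fun z => hf (cons_mono h le_rfl)
    have hGanti : Antitone G := by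
      intro t t' h
      exact integral_mono (hintg t') (hintg t) fun z => hg (cons_mono h le_rfl)
    have hFb : ∀ t, |F t| ≤ C := by
      intro t
      calc |F t| ≤ ∫ z, |f (Fin.cons t z)| ∂(Measure.pi ν) := by
            simpa [Real.norm_eq_abs] using
              norm_integral_le_integral_norm (μ := Measure.pi ν) (fun z => f (Fin.cons t z))
        _ ≤ ∫ _ : Fin n → ℝ, C ∂(Measure.pi ν) :=
            integral_mono (hintf t).abs (integrable_const C) fun z => hfb _
        _ = C := by simp
    have hGb : ∀ t, |G t| ≤ C := by
      intro t
      calc |G t| ≤ ∫ z, |g (Fin.cons t z)| ∂(Measure.pi ν) := by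
            simpa [Real.norm_eq_abs] using
              norm_integral_le_integral_norm (μ := Measure.pi ν) (fun z => g (Fin.cons t z))
        _ ≤ ∫ _ : Fin n → ℝ, C ∂(Measure.pi ν) :=
            integral_mono (hintg t).abs (integrable_const C) fun z => hgb _
        _ = C := by simp
    have hCnn : 0 ≤ C := le_trans (abs_nonneg _) (hfb (fun _ => 0))
    have hprodint : Integrable (fun p : ℝ × (Fin n → ℝ) => f (Fin.cons p.1 p.2) * g (Fin.cons p.1 p.2))
        ((μ 0).prod (Measure.pi ν)) := by
      apply integrable_of_bdd (C := C * C)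
      · apply Measurable.aestronglyMeasurable
        have hm : Measurable (fun p : ℝ × (Fin n → ℝ) => (Fin.cons p.1 p.2 : Fin (n+1) → ℝ)) := by
          apply measurable_pi_iff.mpr
          intro j
          refine Fin.cases ?_ ?_ j
          · simpa using measurable_fst
          · intro k
            have hk : Measurable fun x : ℝ × (Fin n → ℝ) => x.2 k := (measurable_pi_apply k).comp measurable_snd
            simpa using hk
        exact (hfm.comp hm).mul (hgm.comp hm)
      · intro p
        rw [abs_mul]
        exact mul_le_mul (hfb _) (hgb _) (abs_nonneg _) hCnn
    calc ∫ x, f x * g x ∂(Measure.pi μ)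
        = ∫ p, f (Fin.cons p.1 p.2) * g (Fin.cons p.1 p.2) ∂((μ 0).prod (Measure.pi ν)) :=
          htrans _
      _ = ∫ t, ∫ z, f (Fin.cons t z) * g (Fin.cons t z) ∂(Measure.pi ν) ∂(μ 0) :=
          integral_prod _ hprodint
      _ ≤ ∫ t, F t * G t ∂(μ 0) := by
          apply integral_mono
          · exact hprodint.integral_prod_left
          · exact integrable_of_bdd ((hFmono.measurable.mul hGanti.measurable)).aestronglyMeasurable
              (fun t => by rw [abs_mul]; exact mul_le_mul (hFb t) (hGb t) (abs_nonneg _) hCnn)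
          · intro t
            exact ih ν hPν _ _ (fun z z' hz => hf (cons_mono le_rfl hz))
              (fun z z' hz => hg (cons_mono le_rfl hz)) (hsecm f hfm t) (hsecm g hgm t)
              C (fun z => hfb _) (fun z => hgb _)
      _ ≤ (∫ t, F t ∂(μ 0)) * ∫ t, G t ∂(μ 0) :=
          oneDim (μ 0) F G hFmono hGanti hFmono.measurable hGanti.measurable hFb hGb
      _ = (∫ x, f x ∂(Measure.pi μ)) * ∫ x, g x ∂(Measure.pi μ) := by
          have hmcons : Measurable (fun p : ℝ × (Fin n → ℝ) => (Fin.cons p.1 p.2 : Fin (n+1) → ℝ)) := by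
            apply measurable_pi_iff.mpr
            intro j
            refine Fin.cases ?_ ?_ j
            · simpa using measurable_fst
            · intro k
              have hk : Measurable fun x : ℝ × (Fin n → ℝ) => x.2 k := (measurable_pi_apply k).comp measurable_snd
              simpa using hk
          have hf1 : ∫ p : ℝ × (Fin n → ℝ), f (Fin.cons p.1 p.2) ∂((μ 0).prod (Measure.pi ν)) =
              ∫ t, F t ∂(μ 0) :=
            integral_prod (fun p : ℝ × (Fin n → ℝ) => f (Fin.cons p.1 p.2))
              (integrable_of_bdd (Measurable.aestronglyMeasurable (hfm.comp hmcons))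
                (fun p => hfb _))
          have hg1 : ∫ p : ℝ × (Fin n → ℝ), g (Fin.cons p.1 p.2) ∂((μ 0).prod (Measure.pi ν)) =
              ∫ t, G t ∂(μ 0) :=
            integral_prod (fun p : ℝ × (Fin n → ℝ) => g (Fin.cons p.1 p.2))
              (integrable_of_bdd (Measurable.aestronglyMeasurable (hgm.comp hmcons))
                (fun p => hgb _))
          rw [htrans f, htrans g, hf1, hg1]
private lemma env {n : ℕ} (μ : Fin n → Measure ℝ) (hP : ∀ i, IsProbabilityMeasure (μ i))
    (f : (Fin n → ℝ) → ℝ) (hf : Monotone f) (C : ℝ) (hb : ∀ x, |f x| ≤ C) :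
    ∃ f₀ : (Fin n → ℝ) → ℝ, Monotone f₀ ∧ Measurable f₀ ∧ (∀ x, |f₀ x| ≤ C) ∧
      ∃ S : Set (Fin n → ℝ), MeasurableSet S ∧ Measure.pi μ Sᶜ = 0 ∧ ∀ x ∈ S, f x = f₀ x := by
  classical
  obtain _ | n := n
  · refine ⟨fun _ => f (fun i => i.elim0), monotone_const, measurable_const,
      fun x => hb _, Set.univ, MeasurableSet.univ, by simp, fun x _ => ?_⟩
    exact congrArg f (Subsingleton.elim _ _)
  haveI := hP
  have hCnn : 0 ≤ C := le_trans (abs_nonneg _) (hb (fun _ => 0))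
  set D : Fin (n + 1) → Set ℝ := fun i => Set.range ((↑) : ℚ → ℝ) ∪ {t | μ i {t} ≠ 0} with hD
  have hDc : ∀ i, (D i).Countable := by
    intro i
    haveI : IsProbabilityMeasure (μ i) := hP i
    apply (Set.countable_range _).union
    have hcnt := Measure.countable_meas_pos_of_disjoint_iUnion (μ := μ i)
      (As := fun t : ℝ => {t}) (fun t => measurableSet_singleton t)
      (fun a b hab => by simpa [Function.onFun] using Set.disjoint_singleton.mpr hab)
    have : {t : ℝ | μ i {t} ≠ 0} = {t : ℝ | 0 < μ i {t}} := by
      ext t; simp [pos_iff_ne_zero]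
    rw [this]; exact hcnt
  have hQD : ∀ (i : Fin (n + 1)) (q : ℚ), (q : ℝ) ∈ D i := fun i q => Or.inl ⟨q, rfl⟩
  have hatom : ∀ (i : Fin (n + 1)) (t : ℝ), t ∉ D i → μ i {t} = 0 := by
    intro i t ht
    by_contra h
    exact ht (Or.inr h)
  set Dset : Set (Fin (n + 1) → ℝ) := {y | ∀ i, y i ∈ D i} with hDset
  have hDsetc : Dset.Countable := Set.countable_pi hDc
  haveI : Countable ↥Dset := hDsetc.to_subtype
  haveI : Nonempty ↥Dset := ⟨⟨fun _ => ((0 : ℚ) : ℝ), fun i => hQD i 0⟩⟩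
  have hbelow : ∀ x : Fin (n + 1) → ℝ, ∃ y : ↥Dset, (y : Fin (n + 1) → ℝ) ≤ x := by
    intro x
    choose q hq using fun i => exists_rat_lt (x i)
    exact ⟨⟨fun i => (q i : ℝ), fun i => hQD i (q i)⟩, fun i => (hq i).le⟩
  have habove : ∀ x : Fin (n + 1) → ℝ, ∃ y : ↥Dset, x ≤ (y : Fin (n + 1) → ℝ) := by
    intro x
    choose q hq using fun i => exists_rat_gt (x i)
    exact ⟨⟨fun i => (q i : ℝ), fun i => hQD i (q i)⟩, fun i => (hq i).le⟩
  set mix : ℕ → (Fin (n + 1) → ℝ) → (Fin (n + 1) → ℝ) → (Fin (n + 1) → ℝ) :=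
    fun k y' y i => if (i : ℕ) < k then y' i else y i with hmix
  set inner : ℕ → (Fin (n + 1) → ℝ) → (Fin (n + 1) → ℝ) → ℝ := fun k x y =>
    ⨅ y' : ↥Dset, if x ≤ (y' : Fin (n + 1) → ℝ) then f (mix k (y' : Fin (n + 1) → ℝ) y) else C with hinner
  set c : ℕ → (Fin (n + 1) → ℝ) → ℝ := fun k x =>
    ⨆ y : ↥Dset, if (y : Fin (n + 1) → ℝ) ≤ x then inner k x (y : Fin (n + 1) → ℝ) else -C with hcdef
  have hfmem : ∀ x, -C ≤ f x ∧ f x ≤ C := fun x => abs_le.mp (hb x)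
  have hmCC : -C ≤ C := le_trans (hfmem (fun _ => 0)).1 (hfmem (fun _ => 0)).2
  have hinner_bddbelow : ∀ k x y, BddBelow (Set.range fun y' : ↥Dset =>
      if x ≤ (y' : Fin (n + 1) → ℝ) then f (mix k (y' : Fin (n + 1) → ℝ) y) else C) := by
    intro k x y
    refine ⟨-C, ?_⟩
    rintro _ ⟨y', rfl⟩
    dsimp only
    split_ifs
    · exact (hfmem _).1
    · exact hmCC
  have hinner_le : ∀ k x y, inner k x y ≤ C := by
    intro k x y
    obtain ⟨ya, hya⟩ := habove x
    refine ciInf_le_of_le (hinner_bddbelow k x y) ya ?_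
    split_ifs
    all_goals first | exact (hfmem _).2 | exact le_rfl
  have hinner_ge : ∀ k x y, -C ≤ inner k x y := by
    intro k x y
    refine le_ciInf fun y' => ?_
    split_ifs
    · exact (hfmem _).1
    · exact hmCC
  have hBddA : ∀ k x, BddAbove (Set.range fun y : ↥Dset =>
      if (y : Fin (n + 1) → ℝ) ≤ x then inner k x (y : Fin (n + 1) → ℝ) else -C) := by
    intro k x
    refine ⟨C, ?_⟩
    rintro _ ⟨y, rfl⟩
    dsimp only
    split_ifs
    · exact hinner_le k x _
    · exact hmCC
  have hcub : ∀ k x, c k x ≤ C := by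
    intro k x
    refine ciSup_le fun y => ?_
    split_ifs
    · exact hinner_le k x _
    · exact hmCC
  have hclb : ∀ k x, -C ≤ c k x := by
    intro k x
    obtain ⟨yb, hyb⟩ := hbelow x
    refine le_trans ?_ (le_ciSup (hBddA k x) yb)
    rw [if_pos hyb]
    exact hinner_ge k x _
  have hcmono : ∀ k, Monotone (c k) := by
    intro k x x' hxx'
    refine ciSup_mono (hBddA k x') fun y => ?_
    by_cases hy : (y : Fin (n + 1) → ℝ) ≤ x
    · rw [if_pos hy, if_pos (hy.trans hxx')]
      refine ciInf_mono (hinner_bddbelow k x _) fun y' => ?_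
      by_cases hy' : x' ≤ (y' : Fin (n + 1) → ℝ)
      · rw [if_pos hy', if_pos (hxx'.trans hy')]
      · rw [if_neg hy']
        split_ifs
        · exact (hfmem _).2
        · exact le_rfl
    · rw [if_neg hy]
      split_ifs
      · exact hinner_ge k x' _
      · exact le_rfl
  have hc0f : ∀ x, c 0 x ≤ f x := by
    intro x
    refine ciSup_le fun y => ?_
    by_cases hy : (y : Fin (n + 1) → ℝ) ≤ x
    · rw [if_pos hy]
      obtain ⟨ya, hya⟩ := habove x
      refine ciInf_le_of_le (hinner_bddbelow 0 x _) ya ?_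
      rw [if_pos hya]
      have hmix0 : mix 0 (ya : Fin (n + 1) → ℝ) (y : Fin (n + 1) → ℝ) = (y : Fin (n + 1) → ℝ) := by
        funext i; simp [hmix]
      rw [hmix0]
      exact hf hy
    · rw [if_neg hy]
      exact (hfmem x).1
  have hfcN : ∀ x, f x ≤ c (n + 1) x := by
    intro x
    obtain ⟨yb, hyb⟩ := hbelow x
    refine le_trans ?_ (le_ciSup (hBddA (n + 1) x) yb)
    rw [if_pos hyb]
    refine le_ciInf fun y' => ?_
    by_cases hy' : x ≤ (y' : Fin (n + 1) → ℝ)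
    · rw [if_pos hy']
      have hmixN : mix (n + 1) (y' : Fin (n + 1) → ℝ) (yb : Fin (n + 1) → ℝ) = (y' : Fin (n + 1) → ℝ) := by
        funext i; simp [hmix, i.isLt]
      rw [hmixN]
      exact hf hy'
    · rw [if_neg hy']
      exact (hfmem x).2
  -- key exchange inequality
  have hkey : ∀ (x x' : Fin (n + 1) → ℝ) (j : Fin (n + 1)) (s : ℝ), s ∈ D j → x ≤ x' →
      (∀ k, k ≠ j → x k = x' k) → x j ≤ s → s ≤ x' j →
      c (j.val + 1) x ≤ c j.val x' := by
    intro x x' j s hsD hxx' hoff hxjs hsx'j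
    refine ciSup_le fun y => ?_
    by_cases hy : (y : Fin (n + 1) → ℝ) ≤ x
    swap
    · rw [if_neg hy]; exact hclb _ x'
    rw [if_pos hy]
    set yh : Fin (n + 1) → ℝ := Function.update (y : Fin (n + 1) → ℝ) j s with hyh
    have hyhD : ∀ i, yh i ∈ D i := by
      intro i
      by_cases hij : i = j
      · subst hij; simpa [hyh] using hsD
      · simpa [hyh, Function.update_of_ne hij] using y.2 i
    have hyhx' : yh ≤ x' := by
      intro i
      by_cases hij : i = j
      · subst hij; simpa [hyh] using hsx'j
      · rw [hyh, Function.update_of_ne hij, ← hoff i hij]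
        exact hy i
    refine le_trans ?_ (le_ciSup (hBddA j.val x') ⟨yh, hyhD⟩)
    rw [if_pos hyhx']
    refine le_ciInf fun y'' => ?_
    dsimp only
    by_cases hy'' : x' ≤ (y'' : Fin (n + 1) → ℝ)
    swap
    · rw [if_neg hy'']; exact hinner_le _ x _
    rw [if_pos hy'']
    set y'c : Fin (n + 1) → ℝ := Function.update (y'' : Fin (n + 1) → ℝ) j s with hy'c
    have hy'cD : ∀ i, y'c i ∈ D i := by
      intro i
      by_cases hij : i = j
      · subst hij; simpa [hy'c] using hsD
      · simpa [hy'c, Function.update_of_ne hij] using y''.2 i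
    have hxy'c : x ≤ y'c := by
      intro i
      by_cases hij : i = j
      · subst hij; simpa [hy'c] using hxjs
      · rw [hy'c, Function.update_of_ne hij, hoff i hij]
        exact hy'' i
    refine ciInf_le_of_le (hinner_bddbelow _ x _) ⟨y'c, hy'cD⟩ ?_
    dsimp only
    rw [if_pos hxy'c]
    have hmixeq : mix (j.val + 1) y'c (y : Fin (n + 1) → ℝ) = mix j.val (y'' : Fin (n + 1) → ℝ) yh := by
      funext i
      rcases lt_trichotomy (i : ℕ) (j : ℕ) with h1 | h2 | h3
      · have hij : i ≠ j := fun h => by simp [h] at h1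
        simp [hmix, h1, Nat.lt_succ_of_lt h1, hy'c, Function.update_of_ne hij]
      · have hij : i = j := Fin.ext h2
        subst hij
        simp [hmix, hy'c, hyh]
      · have hij : i ≠ j := fun h => by simp [h] at h3
        have h4 : ¬ (i : ℕ) < j.val + 1 := by omega
        have h5 : ¬ (i : ℕ) < j.val := by omega
        simp [hmix, h4, h5, hyh, Function.update_of_ne hij]
    rw [hmixeq]
  -- measurability of c k
  have hcm : ∀ k, Measurable (c k) := by
    intro k
    apply Measurable.iSup
    intro y
    have hsetle : MeasurableSet {x : Fin (n + 1) → ℝ | (y : Fin (n + 1) → ℝ) ≤ x} := by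
      have : {x : Fin (n + 1) → ℝ | (y : Fin (n + 1) → ℝ) ≤ x} =
          ⋂ i, (fun x : Fin (n + 1) → ℝ => x i) ⁻¹' Set.Ici ((y : Fin (n + 1) → ℝ) i) := by
        ext x; simp [Pi.le_def]
      rw [this]
      exact MeasurableSet.iInter fun i => (measurable_pi_apply i) measurableSet_Ici
    refine Measurable.ite hsetle ?_ measurable_const
    apply Measurable.iInf
    intro y'
    have hsetge : MeasurableSet {x : Fin (n + 1) → ℝ | x ≤ (y' : Fin (n + 1) → ℝ)} := by
      have : {x : Fin (n + 1) → ℝ | x ≤ (y' : Fin (n + 1) → ℝ)} =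
          ⋂ i, (fun x : Fin (n + 1) → ℝ => x i) ⁻¹' Set.Iic ((y' : Fin (n + 1) → ℝ) i) := by
        ext x; simp [Pi.le_def]
      rw [this]
      exact MeasurableSet.iInter fun i => (measurable_pi_apply i) measurableSet_Iic
    exact Measurable.ite hsetge measurable_const measurable_const
  -- the null set
  have hnull : Measure.pi μ {x | c 0 x < c (n + 1) x} = 0 := by
    have hsub : {x | c 0 x < c (n + 1) x} ⊆ ⋃ m : ℕ, {x | 1 / (m + 1 : ℝ) ≤ c (n + 1) x - c 0 x} := by
      intro x hx
      obtain ⟨m, hm⟩ := exists_nat_one_div_lt (K := ℝ) (sub_pos.mpr hx)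
      exact Set.mem_iUnion.mpr ⟨m, hm.le⟩
    refine measure_mono_null hsub (measure_iUnion_null fun m => ?_)
    set ε : ℝ := 1 / (m + 1 : ℝ) with hε
    have hεpos : 0 < ε := by positivity
    set δ : ℝ := ε / (n + 1) with hδdef
    have hδpos : 0 < δ := by positivity
    set M : Fin (n + 1) → Set (Fin (n + 1) → ℝ) := fun j =>
      {x | δ ≤ c (j.val + 1) x - c j.val x ∧ x j ∉ D j} with hM
    have hJsub : {x | ε ≤ c (n + 1) x - c 0 x} ⊆ ⋃ j, M j := by
      intro x hx
      by_contra hxn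
      have hnot : ∀ j : Fin (n + 1), ¬ (δ ≤ c (j.val + 1) x - c j.val x ∧ x j ∉ D j) :=
        fun j h => hxn (Set.mem_iUnion.mpr ⟨j, h⟩)
      have hdiff : ∀ j : Fin (n + 1), c (j.val + 1) x - c j.val x < δ := by
        intro j
        by_cases hDj : x j ∈ D j
        · have := hkey x x j (x j) hDj le_rfl (fun _ _ => rfl) le_rfl le_rfl
          linarith
        · by_contra hge
          exact hnot j ⟨not_lt.mp hge, hDj⟩
      have hsum : c (n + 1) x - c 0 x = ∑ i ∈ Finset.range (n + 1), (c (i + 1) x - c i x) :=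
        (Finset.sum_range_sub (fun i => c i x) (n + 1)).symm
      have hlt : ∑ i ∈ Finset.range (n + 1), (c (i + 1) x - c i x) <
          ∑ _i ∈ Finset.range (n + 1), δ := by
        refine Finset.sum_lt_sum_of_nonempty ⟨0, Finset.mem_range.mpr (Nat.succ_pos n)⟩ fun i hi => ?_
        exact hdiff ⟨i, Finset.mem_range.mp hi⟩
      have hNδ : ∑ _i ∈ Finset.range (n + 1), δ = ε := by
        rw [Finset.sum_const, Finset.card_range, nsmul_eq_mul, hδdef]
        push_cast
        field_simp
      have hxε : ε ≤ c (n + 1) x - c 0 x := hx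
      rw [hsum] at hxε
      rw [hNδ] at hlt
      linarith
    refine measure_mono_null hJsub (measure_iUnion_null fun j => ?_)
    -- measurability of M j
    have hMm : MeasurableSet (M j) := by
      have hMeq : M j = {x : Fin (n + 1) → ℝ | δ ≤ c (j.val + 1) x - c j.val x} ∩
          ((fun x : Fin (n + 1) → ℝ => x j) ⁻¹' (D j)ᶜ) := rfl
      rw [hMeq]
      exact (measurableSet_le measurable_const ((hcm (j.val + 1)).sub (hcm j.val))).inter
        ((measurable_pi_apply j) (hDc j).measurableSet.compl)
    -- Fubini over coordinate j
    set e := MeasurableEquiv.piFinSuccAbove (fun _ : Fin (n + 1) => ℝ) j with he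
    have mp : MeasurePreserving (⇑e) (Measure.pi μ)
        ((μ j).prod (Measure.pi fun k => μ (j.succAbove k))) :=
      measurePreserving_piFinSuccAbove μ j
    have hMB : MeasurableSet (⇑e.symm ⁻¹' M j) := e.symm.measurable hMm
    have h1 : Measure.pi μ (M j) =
        ((μ j).prod (Measure.pi fun k => μ (j.succAbove k))) (⇑e.symm ⁻¹' M j) := by
      have hpre : ⇑e ⁻¹' (⇑e.symm ⁻¹' M j) = M j := by
        ext x; simp
      calc Measure.pi μ (M j) = Measure.pi μ (⇑e ⁻¹' (⇑e.symm ⁻¹' M j)) := by rw [hpre]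
        _ = (Measure.map (⇑e) (Measure.pi μ)) (⇑e.symm ⁻¹' M j) :=
            (Measure.map_apply e.measurable hMB).symm
        _ = _ := by rw [mp.map_eq]
    rw [h1, Measure.prod_apply_symm hMB]
    have hsec : ∀ z : Fin n → ℝ,
        (μ j) ((fun t => (t, z)) ⁻¹' (⇑e.symm ⁻¹' M j)) = 0 := by
      intro z
      set ins : ℝ → (Fin (n + 1) → ℝ) := fun t => j.insertNth t z with hins
      have hinse : ∀ t, e.symm (t, z) = ins t := fun t => rfl
      have hpre2 : ((fun t => (t, z)) ⁻¹' (⇑e.symm ⁻¹' M j)) = {t | ins t ∈ M j} := by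
        ext t; simp [hinse]
      rw [hpre2]
      set Tset : Set ℝ := {t | ins t ∈ M j} with hT
      have hTA : ∀ t ∈ Tset, δ ≤ c (j.val + 1) (ins t) - c j.val (ins t) ∧ t ∉ D j := by
        intro t ht
        obtain ⟨h1', h2'⟩ := ht
        refine ⟨h1', ?_⟩
        simpa only [hins, Fin.insertNth_apply_same] using h2'
      have hstep : ∀ t₁ t₂, t₁ ∈ Tset → t₂ ∈ Tset → t₁ < t₂ →
          c j.val (ins t₁) + δ ≤ c j.val (ins t₂) := by
        intro t₁ t₂ h₁ h₂ hlt
        obtain ⟨q, hq1, hq2⟩ := exists_rat_btwn hlt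
        have hins_le : ins t₁ ≤ ins t₂ := by
          intro k
          rcases eq_or_ne k j with rfl | hk
          · simpa [hins, Fin.insertNth_apply_same] using hlt.le
          · obtain ⟨k', rfl⟩ := Fin.exists_succAbove_eq hk
            simp [hins, Fin.insertNth_apply_succAbove]
        have hoff : ∀ k, k ≠ j → ins t₁ k = ins t₂ k := by
          intro k hk
          obtain ⟨k', rfl⟩ := Fin.exists_succAbove_eq hk
          simp [hins, Fin.insertNth_apply_succAbove]
        have hkey' := hkey (ins t₁) (ins t₂) j q (hQD j q) hins_le hoff
          (by rw [hins]; simpa [Fin.insertNth_apply_same] using hq1.le)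
          (by rw [hins]; simpa [Fin.insertNth_apply_same] using hq2.le)
        have hδ1 := (hTA t₁ h₁).1
        linarith
      have hfin : Tset.Finite := by
        set v : ℝ → ℤ := fun t => ⌈c j.val (ins t) / δ⌉ with hv
        have hmono : ∀ t₁ ∈ Tset, ∀ t₂ ∈ Tset, t₁ < t₂ → v t₁ < v t₂ := by
          intro t₁ h₁ t₂ h₂ hlt
          have hst := hstep t₁ t₂ h₁ h₂ hlt
          have hdiv : c j.val (ins t₁) / δ + 1 ≤ c j.val (ins t₂) / δ := by
            have h1' : (c j.val (ins t₁) + δ) / δ ≤ c j.val (ins t₂) / δ :=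
              (div_le_div_iff_of_pos_right hδpos).mpr hst
            rwa [add_div, div_self (ne_of_gt hδpos)] at h1'
          calc v t₁ < v t₁ + 1 := lt_add_one _
            _ = ⌈c j.val (ins t₁) / δ + 1⌉ := by rw [Int.ceil_add_one]
            _ ≤ v t₂ := Int.ceil_le_ceil hdiv
        have himg : (v '' Tset) ⊆ Set.Icc ⌈(-C) / δ⌉ ⌈C / δ⌉ := by
          rintro _ ⟨t, _ht, rfl⟩
          constructor
          · exact Int.ceil_le_ceil ((div_le_div_iff_of_pos_right hδpos).mpr (hclb j.val (ins t)))
          · exact Int.ceil_le_ceil ((div_le_div_iff_of_pos_right hδpos).mpr (hcub j.val (ins t)))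
        have hinj : Set.InjOn v Tset := by
          intro a ha b hb hab
          by_contra hne
          rcases lt_or_gt_of_ne hne with h | h
          · exact absurd hab (ne_of_lt (hmono a ha b hb h))
          · exact absurd hab.symm (ne_of_lt (hmono b hb a ha h))
        exact Set.Finite.of_finite_image ((Set.finite_Icc _ _).subset himg) hinj
      have : μ j Tset = μ j (⋃ t ∈ Tset, {t}) := by rw [Set.biUnion_of_singleton]
      rw [this]
      exact (measure_biUnion_null_iff hfin.countable).mpr
        (fun t ht => hatom j t (hTA t ht).2)
    simp [hsec]
  refine ⟨c 0, hcmono 0, hcm 0, fun x => abs_le.mpr ⟨hclb 0 x, hcub 0 x⟩,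
    {x | c (n + 1) x ≤ c 0 x}, measurableSet_le (hcm (n + 1)) (hcm 0), ?_, ?_⟩
  · have hcompl : {x | c (n + 1) x ≤ c 0 x}ᶜ = {x | c 0 x < c (n + 1) x} := by
      ext x; simp [not_le]
    rw [hcompl]
    exact hnull
  · intro x hx
    exact le_antisymm ((hfcN x).trans hx) (hc0f x)
private theorem harris_bounded
    (Ω : Type*) [MeasurableSpace Ω] (P : Measure Ω) [IsProbabilityMeasure P]
    (n : ℕ) (X : Fin n → Ω → ℝ) (hmeas : ∀ i, Measurable (X i))
    (hindep : iIndepFun X P)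
    (f g : (Fin n → ℝ) → ℝ)
    (hf : Monotone f) (hg : Antitone g)
    (C : ℝ) (hfb : ∀ x, |f x| ≤ C) (hgb : ∀ x, |g x| ≤ C) :
    (∫ ω, f (fun i => X i ω) * g (fun i => X i ω) ∂P) ≤
      (∫ ω, f (fun i => X i ω) ∂P) * ∫ ω, g (fun i => X i ω) ∂P := by
  classical
  set T : Ω → (Fin n → ℝ) := fun ω i => X i ω with hT
  have hTm : Measurable T := measurable_pi_lambda _ hmeas
  set μ : Fin n → Measure ℝ := fun i => P.map (X i) with hμ
  haveI hPμ : ∀ i, IsProbabilityMeasure (μ i) := fun i =>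
    Measure.isProbabilityMeasure_map (hmeas i).aemeasurable
  have hmap : P.map T = Measure.pi μ := by
    refine (Measure.pi_eq fun s hs => ?_).symm
    rw [Measure.map_apply hTm (MeasurableSet.univ_pi hs)]
    have hpre : T ⁻¹' Set.pi Set.univ s = ⋂ i, X i ⁻¹' s i := by
      ext ω; simp [hT, Set.mem_pi]
    rw [hpre]
    have h1 := hindep.measure_inter_preimage_eq_mul Finset.univ (sets := s)
      (fun i _ => hs i)
    rw [← Set.biInter_univ (fun i => X i ⁻¹' s i)]
    have h2 : ⋂ i ∈ (Set.univ : Set (Fin n)), X i ⁻¹' s i =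
        ⋂ i ∈ Finset.univ, X i ⁻¹' s i := by simp
    rw [h2, h1]
    exact Finset.prod_congr rfl fun i _ => (Measure.map_apply (hmeas i) (hs i)).symm
  obtain ⟨f₀, hf₀mono, hf₀m, hf₀b, S_f, hSfm, hSfnull, hSfeq⟩ := env μ hPμ f hf C hfb
  set ν : Fin n → Measure ℝ := fun i => (μ i).map (fun t : ℝ => -t) with hν
  haveI hPν : ∀ i, IsProbabilityMeasure (ν i) := fun i =>
    Measure.isProbabilityMeasure_map measurable_neg.aemeasurable
  have hgneg : Monotone (fun x : Fin n → ℝ => g (-x)) := by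
    intro x y hxy
    exact hg (by intro i; simpa using hxy i)
  obtain ⟨h₀, hh₀mono, hh₀m, hh₀b, S_h, hShm, hShnull, hSheq⟩ :=
    env ν hPν (fun x => g (-x)) hgneg C (fun x => hgb _)
  set negm : (Fin n → ℝ) → (Fin n → ℝ) := fun x => -x with hnegdef
  have hnegm : Measurable negm := measurable_pi_lambda _ fun i =>
    (measurable_pi_apply i).neg
  have hmapneg : (Measure.pi μ).map negm = Measure.pi ν := by
    refine (Measure.pi_eq fun s hs => ?_).symm
    rw [Measure.map_apply hnegm (MeasurableSet.univ_pi hs)]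
    have hpre : negm ⁻¹' Set.pi Set.univ s =
        Set.pi Set.univ (fun i => (fun t : ℝ => -t) ⁻¹' s i) := by
      ext x; simp [hnegdef, Set.mem_pi]
    rw [hpre, Measure.pi_pi]
    exact Finset.prod_congr rfl fun i _ =>
      (Measure.map_apply measurable_neg (hs i)).symm
  set g₀ : (Fin n → ℝ) → ℝ := fun x => h₀ (-x) with hg₀def
  have hg₀anti : Antitone g₀ := by
    intro x y hxy
    exact hh₀mono (by intro i; simpa using hxy i)
  have hg₀m : Measurable g₀ := hh₀m.comp hnegm
  have hg₀b : ∀ x, |g₀ x| ≤ C := fun x => hh₀b _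
  set S_g : Set (Fin n → ℝ) := negm ⁻¹' S_h with hSgdef
  have hSgm : MeasurableSet S_g := hnegm hShm
  have hSgnull : Measure.pi μ S_gᶜ = 0 := by
    have hcompl : S_gᶜ = negm ⁻¹' S_hᶜ := by ext x; simp [hSgdef]
    rw [hcompl, ← Measure.map_apply hnegm hShm.compl, hmapneg]
    exact hShnull
  have hSgeq : ∀ x ∈ S_g, g x = g₀ x := by
    intro x hx
    have h := hSheq (-x) hx
    simpa [hg₀def] using h
  -- a.e. equalities on Ω
  have haemem : ∀ (S : Set (Fin n → ℝ)), MeasurableSet S → Measure.pi μ Sᶜ = 0 →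
      ∀ᵐ ω ∂P, T ω ∈ S := by
    intro S hSm hSnull
    have hTnull : P (T ⁻¹' Sᶜ) = 0 := by
      rw [← Measure.map_apply hTm hSm.compl, hmap]; exact hSnull
    rw [ae_iff]
    exact measure_mono_null (fun ω h => h) hTnull
  have haef : (fun ω => f (T ω)) =ᵐ[P] fun ω => f₀ (T ω) :=
    (haemem S_f hSfm hSfnull).mono fun ω h => hSfeq _ h
  have haeg : (fun ω => g (T ω)) =ᵐ[P] fun ω => g₀ (T ω) :=
    (haemem S_g hSgm hSgnull).mono fun ω h => hSgeq _ h
  have hif : ∫ ω, f (T ω) ∂P = ∫ x, f₀ x ∂(Measure.pi μ) := by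
    calc ∫ ω, f (T ω) ∂P = ∫ ω, f₀ (T ω) ∂P := integral_congr_ae haef
      _ = ∫ x, f₀ x ∂(P.map T) :=
          (integral_map hTm.aemeasurable hf₀m.aestronglyMeasurable).symm
      _ = _ := by rw [hmap]
  have hig : ∫ ω, g (T ω) ∂P = ∫ x, g₀ x ∂(Measure.pi μ) := by
    calc ∫ ω, g (T ω) ∂P = ∫ ω, g₀ (T ω) ∂P := integral_congr_ae haeg
      _ = ∫ x, g₀ x ∂(P.map T) :=
          (integral_map hTm.aemeasurable hg₀m.aestronglyMeasurable).symm
      _ = _ := by rw [hmap]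
  have hifg : ∫ ω, f (T ω) * g (T ω) ∂P = ∫ x, f₀ x * g₀ x ∂(Measure.pi μ) := by
    calc ∫ ω, f (T ω) * g (T ω) ∂P = ∫ ω, f₀ (T ω) * g₀ (T ω) ∂P :=
          integral_congr_ae (haef.mul haeg)
      _ = ∫ x, f₀ x * g₀ x ∂(P.map T) :=
          (integral_map hTm.aemeasurable
            (hf₀m.mul hg₀m).aestronglyMeasurable).symm
      _ = _ := by rw [hmap]
  have hTfun : ∀ ω, (fun i => X i ω) = T ω := fun ω => rfl
  simp only [hTfun]
  rw [hifg, hif, hig]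
  exact harris_pi n μ hPμ f₀ g₀ hf₀mono hg₀anti hf₀m hg₀m C hf₀b hg₀b
/-- Harris' negative association inequality. -/
theorem stmt_7
    (Ω : Type*) [MeasurableSpace Ω] (P : Measure Ω) [IsProbabilityMeasure P]
    (n : ℕ) (X : Fin n → Ω → ℝ) (hmeas : ∀ i, Measurable (X i))
    (hindep : iIndepFun X P)
    (f g : (Fin n → ℝ) → ℝ)
    (hf : Monotone f) (hg : Antitone g)
    (hfint : Integrable (fun ω => f (fun i => X i ω)) P)
    (hgint : Integrable (fun ω => g (fun i => X i ω)) P)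
    (hfgint : Integrable (fun ω => f (fun i => X i ω) * g (fun i => X i ω)) P) :
    (∫ ω, f (fun i => X i ω) * g (fun i => X i ω) ∂P) ≤
      (∫ ω, f (fun i => X i ω) ∂P) * ∫ ω, g (fun i => X i ω) ∂P := by
  classical
  set trunc : ℕ → ℝ → ℝ := fun k a => max (-(k : ℝ)) (min a (k : ℝ)) with htr
  have htrunc_mono : ∀ k : ℕ, Monotone (trunc k) := fun k a b h =>
    max_le_max le_rfl (min_le_min h le_rfl)
  have htrunc_abs : ∀ (k : ℕ) (a : ℝ), |trunc k a| ≤ |a| := by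
    intro k a
    have hk0 : (0 : ℝ) ≤ k := Nat.cast_nonneg k
    rcases le_total a 0 with h | h
    · rw [htr]
      dsimp only
      rw [min_eq_left (h.trans hk0), abs_le]
      refine ⟨?_, ?_⟩
      · have : -|a| = a := by rw [abs_of_nonpos h, neg_neg]
        rw [this]; exact le_max_right _ _
      · exact max_le (le_trans (neg_nonpos.mpr hk0) (abs_nonneg a)) (le_abs_self a)
    · rw [htr]
      dsimp only
      have hmin0 : (0 : ℝ) ≤ min a (k : ℝ) := le_min h hk0
      rw [max_eq_right (le_trans (neg_nonpos.mpr hk0) hmin0), abs_of_nonneg hmin0,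
        abs_of_nonneg h]
      exact min_le_left _ _
  have htrunc_eq : ∀ (k : ℕ) (a : ℝ), |a| ≤ (k : ℝ) → trunc k a = a := by
    intro k a h
    rw [abs_le] at h
    rw [htr]; dsimp only
    rw [min_eq_left h.2, max_eq_right h.1]
  have htrunc_bdd : ∀ (k : ℕ) (a : ℝ), |trunc k a| ≤ (k : ℝ) := by
    intro k a
    have hk0 : (0 : ℝ) ≤ k := Nat.cast_nonneg k
    rw [abs_le]
    exact ⟨le_max_left _ _, max_le (le_trans (neg_nonpos.mpr hk0) hk0) (min_le_right _ _)⟩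
  have htrunc_cont : ∀ k : ℕ, Continuous (trunc k) :=
    fun k => continuous_const.max (continuous_id.min continuous_const)
  -- the bounded inequality
  have hIneq : ∀ k : ℕ,
      (∫ ω, trunc k (f (fun i => X i ω)) * trunc k (g (fun i => X i ω)) ∂P) ≤
        (∫ ω, trunc k (f (fun i => X i ω)) ∂P) *
          ∫ ω, trunc k (g (fun i => X i ω)) ∂P := by
    intro k
    exact harris_bounded Ω P n X hmeas hindep (fun x => trunc k (f x)) (fun x => trunc k (g x))
      (fun x y h => htrunc_mono k (hf h)) (fun x y h => htrunc_mono k (hg h))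
      (k : ℝ) (fun x => htrunc_bdd k _) (fun x => htrunc_bdd k _)
  -- limits
  have haesm_f : ∀ k : ℕ, AEStronglyMeasurable (fun ω => trunc k (f (fun i => X i ω))) P :=
    fun k => (htrunc_cont k).comp_aestronglyMeasurable hfint.aestronglyMeasurable
  have haesm_g : ∀ k : ℕ, AEStronglyMeasurable (fun ω => trunc k (g (fun i => X i ω))) P :=
    fun k => (htrunc_cont k).comp_aestronglyMeasurable hgint.aestronglyMeasurable
  have hptwise : ∀ a : ℝ, Filter.Tendsto (fun k : ℕ => trunc k a) Filter.atTop (nhds a) := by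
    intro a
    have hev : ∀ᶠ k : ℕ in Filter.atTop, trunc k a = a :=
      Filter.eventually_atTop.mpr ⟨⌈|a|⌉₊, fun k hk =>
        htrunc_eq k a (le_trans (Nat.le_ceil _) (Nat.cast_le.mpr hk))⟩
    exact Filter.Tendsto.congr' (hev.mono fun k h => h.symm) tendsto_const_nhds
  have hL1 : Filter.Tendsto (fun k : ℕ => ∫ ω, trunc k (f (fun i => X i ω)) ∂P)
      Filter.atTop (nhds (∫ ω, f (fun i => X i ω) ∂P)) := by
    refine MeasureTheory.tendsto_integral_of_dominated_convergence
      (fun ω => |f (fun i => X i ω)|) haesm_f hfint.abs ?_ ?_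
    · intro k
      filter_upwards with ω
      simpa [Real.norm_eq_abs] using htrunc_abs k (f (fun i => X i ω))
    · filter_upwards with ω
      exact hptwise _
  have hL2 : Filter.Tendsto (fun k : ℕ => ∫ ω, trunc k (g (fun i => X i ω)) ∂P)
      Filter.atTop (nhds (∫ ω, g (fun i => X i ω) ∂P)) := by
    refine MeasureTheory.tendsto_integral_of_dominated_convergence
      (fun ω => |g (fun i => X i ω)|) haesm_g hgint.abs ?_ ?_
    · intro k
      filter_upwards with ω
      simpa [Real.norm_eq_abs] using htrunc_abs k (g (fun i => X i ω))
    · filter_upwards with ω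
      exact hptwise _
  have hL3 : Filter.Tendsto
      (fun k : ℕ => ∫ ω, trunc k (f (fun i => X i ω)) * trunc k (g (fun i => X i ω)) ∂P)
      Filter.atTop (nhds (∫ ω, f (fun i => X i ω) * g (fun i => X i ω) ∂P)) := by
    refine MeasureTheory.tendsto_integral_of_dominated_convergence
      (fun ω => |f (fun i => X i ω) * g (fun i => X i ω)|)
      (fun k => (haesm_f k).mul (haesm_g k)) hfgint.abs ?_ ?_
    · intro k
      filter_upwards with ω
      rw [Real.norm_eq_abs, abs_mul, abs_mul]
      exact mul_le_mul (htrunc_abs k _) (htrunc_abs k _) (abs_nonneg _) (abs_nonneg _)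
    · filter_upwards with ω
      exact (hptwise _).mul (hptwise _)
  exact le_of_tendsto_of_tendsto' hL3 (hL1.mul hL2) hIneq
end

section
/- Let α > 1, V(x) = |x|^α/α, and let μ be the probability measure on ℝ with density e^{−V(x)}/Z, where Z = ∫ e^{−V} dx. Let ν be the symmetric exponential measure on ℝ with density (1/2)e^{−|x|}, and let t be the monotone rearrangement pushing ν forward to μ. Then there is a constant C_α > 0, depending only on α, such that for every x ∈ ℝ, | t'( t⁻¹(x) ) | ≤ C_α / ( V'(|x|) + 1 ) = C_α / ( |x|^{α−1} + 1 ). -/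
open MeasureTheory ProbabilityTheory Set Filter

namespace Stmt13Aux

lemma even_integrable {f : ℝ → ℝ} (he : ∀ x, f (-x) = f x)
    (hi : IntegrableOn f (Ioi 0)) : Integrable f := by
  have int_Iic : IntegrableOn f (Iic 0) := by
    rw [← Measure.map_neg_eq_self (volume : Measure ℝ)]
    have m : MeasurableEmbedding fun x : ℝ => -x :=
      (Homeomorph.neg ℝ).measurableEmbedding
    rw [m.integrableOn_map_iff]
    simp_rw [Function.comp_def, he, neg_preimage, neg_Iic, neg_zero]
    exact Iff.mpr integrableOn_Ici_iff_integrableOn_Ioi hi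
  have h := int_Iic.union hi
  rw [Iic_union_Ioi] at h
  exact integrableOn_univ.mp h

lemma integral_Iic_neg {f : ℝ → ℝ} (he : ∀ x, f (-x) = f x) (s : ℝ) :
    ∫ x in Iic (-s), f x = ∫ x in Ioi s, f x := by
  have : ∫ x in Iic (-s), f x = ∫ x in Iic (-s), f (-x) :=
    (setIntegral_congr_fun measurableSet_Iic fun x _ => (he x).symm)
  rw [this, integral_comp_neg_Iic, neg_neg]

lemma hasDerivAt_integral_Iic {f : ℝ → ℝ} (hc : Continuous f) (hi : Integrable f) (x : ℝ) :
    HasDerivAt (fun y => ∫ u in Iic y, f u) (f x) x := by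
  have key : ∀ y : ℝ, ∫ u in Iic y, f u = (∫ u in Iic 0, f u) + ∫ u in (0:ℝ)..y, f u := by
    intro y
    rw [← intervalIntegral.integral_Iic_sub_Iic hi.integrableOn hi.integrableOn]
    ring
  rw [funext key]
  exact ((intervalIntegral.integral_hasDerivAt_right hi.intervalIntegrable
    hc.stronglyMeasurable.stronglyMeasurableAtFilter hc.continuousAt).const_add _)

lemma wd_Iic {h : ℝ → ℝ} (hnn : ∀ x, 0 ≤ h x) (hi : Integrable h) (s : ℝ) :
    (volume.withDensity fun x => ENNReal.ofReal (h x)) (Iic s)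
      = ENNReal.ofReal (∫ u in Iic s, h u) := by
  rw [withDensity_apply _ measurableSet_Iic,
    ← ofReal_integral_eq_lintegral_ofReal hi.integrableOn
      (Filter.Eventually.of_forall fun x => hnn x)]

section Densities

lemma fd_cont {α : ℝ} (hα : 1 < α) : Continuous fun x : ℝ => Real.exp (-(|x| ^ α / α)) := by
  have h : Continuous fun x : ℝ => |x| ^ α :=
    continuous_abs.rpow_const (fun x => Or.inr (by linarith))
  exact ((h.div_const α).neg).rexp

lemma fd_even {α : ℝ} (x : ℝ) :
    Real.exp (-(|(-x)| ^ α / α)) = Real.exp (-(|x| ^ α / α)) := by rw [abs_neg]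

lemma fd_intIoi {α : ℝ} (hα : 1 < α) (y : ℝ) :
    IntegrableOn (fun x : ℝ => Real.exp (-(|x| ^ α / α))) (Ioi y) := by
  have h0 : IntegrableOn (fun x : ℝ => Real.exp (-(|x| ^ α / α))) (Ioi 0) := by
    have h := integrableOn_rpow_mul_exp_neg_mul_rpow (p := α) (s := 0) (b := α⁻¹)
      (by norm_num) (by linarith) (inv_pos.mpr (by linarith))
    refine h.congr_fun (fun x hx => ?_) measurableSet_Ioi
    dsimp only
    rw [Real.rpow_zero, one_mul, abs_of_pos hx]
    ring_nf
  rcases le_total 0 y with hy | hy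
  · exact h0.mono_set (Ioi_subset_Ioi hy)
  · have := (even_integrable (fd_even (α := α)) h0)
    exact this.integrableOn

lemma fd_int {α : ℝ} (hα : 1 < α) : Integrable fun x : ℝ => Real.exp (-(|x| ^ α / α)) :=
  even_integrable (fd_even (α := α)) (fd_intIoi hα 0)

lemma gd_cont : Continuous fun x : ℝ => 1 / 2 * Real.exp (-|x|) :=
  continuous_const.mul (continuous_abs.neg.rexp)

lemma gd_int : Integrable fun x : ℝ => 1 / 2 * Real.exp (-|x|) := by
  refine even_integrable (fun x => by rw [abs_neg]) ?_
  have h : IntegrableOn (fun x : ℝ => 1 / 2 * Real.exp (-(1 : ℝ) * x)) (Ioi 0) :=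
    ((exp_neg_integrableOn_Ioi 0 one_pos).const_mul _)
  refine h.congr_fun (fun x hx => ?_) measurableSet_Ioi
  dsimp only
  rw [abs_of_pos hx, neg_one_mul]

lemma gd_Ioi {s : ℝ} (hs : 0 ≤ s) :
    ∫ u in Ioi s, 1 / 2 * Real.exp (-|u|) = 1 / 2 * Real.exp (-s) := by
  have : ∫ u in Ioi s, 1 / 2 * Real.exp (-|u|) = ∫ u in Ioi s, 1 / 2 * Real.exp (-u) := by
    refine setIntegral_congr_fun measurableSet_Ioi (fun u hu => ?_)
    rw [abs_of_pos (lt_of_le_of_lt hs hu)]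
  rw [this, MeasureTheory.integral_const_mul, integral_exp_neg_Ioi]

lemma gd_Iic {s : ℝ} (hs : s ≤ 0) :
    ∫ u in Iic s, 1 / 2 * Real.exp (-|u|) = 1 / 2 * Real.exp s := by
  have : ∫ u in Iic s, 1 / 2 * Real.exp (-|u|) = ∫ u in Iic s, 1 / 2 * Real.exp u := by
    refine setIntegral_congr_fun measurableSet_Iic (fun u hu => ?_)
    rw [abs_of_nonpos (le_trans hu hs), neg_neg]
  rw [this, MeasureTheory.integral_const_mul, integral_exp_Iic]

lemma gd_nonneg (x : ℝ) : 0 ≤ 1 / 2 * Real.exp (-|x|) := by positivity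

lemma gd_le_Iic (s : ℝ) :
    1 / 2 * Real.exp (-|s|) ≤ ∫ u in Iic s, 1 / 2 * Real.exp (-|u|) := by
  rcases le_total s 0 with hs | hs
  · rw [gd_Iic hs, abs_of_nonpos hs, neg_neg]
  · calc 1 / 2 * Real.exp (-|s|) ≤ 1 / 2 * 1 := by
          have : Real.exp (-|s|) ≤ 1 := Real.exp_le_one_iff.mpr (by simp [abs_nonneg])
          linarith
      _ = ∫ u in Iic (0:ℝ), 1 / 2 * Real.exp (-|u|) := by
          rw [gd_Iic le_rfl]; simp
      _ ≤ ∫ u in Iic s, 1 / 2 * Real.exp (-|u|) := by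
          refine setIntegral_mono_set gd_int.integrableOn
            (Filter.Eventually.of_forall gd_nonneg)
            (HasSubset.Subset.eventuallyLE (Iic_subset_Iic.mpr hs))

lemma gd_le_Ioi (s : ℝ) :
    1 / 2 * Real.exp (-|s|) ≤ ∫ u in Ioi s, 1 / 2 * Real.exp (-|u|) := by
  rcases le_total 0 s with hs | hs
  · rw [gd_Ioi hs, abs_of_nonneg hs]
  · calc 1 / 2 * Real.exp (-|s|) ≤ 1 / 2 * 1 := by
          have : Real.exp (-|s|) ≤ 1 := Real.exp_le_one_iff.mpr (by simp [abs_nonneg])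
          linarith
      _ = ∫ u in Ioi (0:ℝ), 1 / 2 * Real.exp (-|u|) := by
          rw [gd_Ioi le_rfl]; simp
      _ ≤ ∫ u in Ioi s, 1 / 2 * Real.exp (-|u|) := by
          refine setIntegral_mono_set gd_int.integrableOn
            (Filter.Eventually.of_forall gd_nonneg)
            (HasSubset.Subset.eventuallyLE (Ioi_subset_Ioi hs))

lemma gd_total : ∫ u, 1 / 2 * Real.exp (-|u|) = 1 := by
  have h := integral_add_compl (measurableSet_Iic (a := (0:ℝ))) gd_int
  rw [compl_Iic] at h
  rw [← h, gd_Iic le_rfl, gd_Ioi le_rfl]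
  norm_num

end Densities

lemma key_antideriv {α : ℝ} (hα : 1 < α) {y : ℝ} (hy : 1 ≤ y) :
    ∫ u in Ioi y, u ^ (α - 1) * Real.exp (-(u ^ α / α)) = Real.exp (-(y ^ α / α)) := by
  have hα0 : (0:ℝ) < α := by linarith
  have hd : ∀ u ∈ Ici y, HasDerivAt (fun u : ℝ => -Real.exp (-(u ^ α / α)))
      (u ^ (α - 1) * Real.exp (-(u ^ α / α))) u := by
    intro u hu
    have hu0 : u ≠ 0 := by
      have : (1:ℝ) ≤ u := le_trans hy hu
      linarith
    have h1 : HasDerivAt (fun u : ℝ => u ^ α) (α * u ^ (α - 1)) u :=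
      Real.hasDerivAt_rpow_const (Or.inl hu0)
    have h2 := (((h1.div_const α).neg).exp).neg
    have h3 : HasDerivAt (fun u : ℝ => -Real.exp (-(u ^ α / α)))
        (-(Real.exp (-(u ^ α / α)) * -(α * u ^ (α - 1) / α))) u := h2
    convert h3 using 1
    field_simp
  have hint : IntegrableOn (fun u : ℝ => u ^ (α - 1) * Real.exp (-(u ^ α / α))) (Ioi y) := by
    have h := integrableOn_rpow_mul_exp_neg_mul_rpow (p := α) (s := α - 1) (b := α⁻¹)
      (by linarith) hα0 (inv_pos.mpr hα0)
    refine (h.mono_set (Ioi_subset_Ioi (by linarith : (0:ℝ) ≤ y))).congr_fun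
      (fun u hu => ?_) measurableSet_Ioi
    ring_nf
  have htend : Tendsto (fun u : ℝ => -Real.exp (-(u ^ α / α))) atTop (nhds 0) := by
    have h1 : Tendsto (fun u : ℝ => u ^ α / α) atTop atTop :=
      (tendsto_rpow_atTop hα0).atTop_div_const hα0
    have h2 : Tendsto (fun u : ℝ => Real.exp (-(u ^ α / α))) atTop (nhds 0) :=
      Real.tendsto_exp_neg_atTop_nhds_zero.comp h1
    simpa using h2.neg
  have := integral_Ioi_of_hasDerivAt_of_tendsto' hd hint htend
  rw [this]
  ring

lemma tail_bound {α : ℝ} (hα : 1 < α) :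
    ∃ C : ℝ, 0 < C ∧ ∀ y : ℝ, 0 ≤ y →
      (y ^ (α - 1) + 1) * (∫ u in Ioi y, Real.exp (-(|u| ^ α / α)))
        ≤ C * Real.exp (-(y ^ α / α)) := by
  have hα0 : (0:ℝ) < α := by linarith
  set Z' : ℝ := ∫ u, Real.exp (-(|u| ^ α / α)) with hZ'
  have hZ'nn : 0 ≤ Z' := integral_nonneg fun x => (Real.exp_pos _).le
  refine ⟨2 + 2 * Z' * Real.exp α⁻¹, by positivity, fun y hy => ?_⟩
  rcases le_or_gt 1 y with h1 | h1
  · -- y ≥ 1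
    have hy0 : (0:ℝ) < y := by linarith
    have hyp : (1:ℝ) ≤ y ^ (α - 1) := Real.one_le_rpow h1 (by linarith)
    have hstep : (∫ u in Ioi y, Real.exp (-(|u| ^ α / α)))
        ≤ (y ^ (α - 1))⁻¹ * Real.exp (-(y ^ α / α)) := by
      have hmono : ∀ u ∈ Ioi y, Real.exp (-(|u| ^ α / α))
          ≤ (y ^ (α - 1))⁻¹ * (u ^ (α - 1) * Real.exp (-(u ^ α / α))) := by
        intro u hu
        have huy : y ≤ u := (le_of_lt hu)
        have hu0 : (0:ℝ) < u := lt_of_lt_of_le hy0 huy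
        rw [abs_of_pos hu0]
        have hru : y ^ (α - 1) ≤ u ^ (α - 1) :=
          Real.rpow_le_rpow hy0.le huy (by linarith)
        have hpos : (0:ℝ) < y ^ (α - 1) := Real.rpow_pos_of_pos hy0 _
        rw [← mul_assoc]
        nth_rewrite 1 [show Real.exp (-(u ^ α / α)) = 1 * Real.exp (-(u ^ α / α)) by ring]
        gcongr
        rw [inv_mul_eq_div, le_div_iff₀ hpos, one_mul]
        exact hru
      have hIone : IntegrableOn (fun u : ℝ =>
          (y ^ (α - 1))⁻¹ * (u ^ (α - 1) * Real.exp (-(u ^ α / α)))) (Ioi y) := by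
        have h := integrableOn_rpow_mul_exp_neg_mul_rpow (p := α) (s := α - 1) (b := α⁻¹)
          (by linarith) hα0 (inv_pos.mpr hα0)
        have h2 : IntegrableOn (fun u : ℝ =>
            (y ^ (α - 1))⁻¹ * (u ^ (α - 1) * Real.exp (-α⁻¹ * u ^ α))) (Ioi y) :=
          (h.mono_set (Ioi_subset_Ioi hy0.le)).const_mul _
        refine h2.congr_fun (fun u hu => ?_) measurableSet_Ioi
        ring_nf
      calc (∫ u in Ioi y, Real.exp (-(|u| ^ α / α)))
          ≤ ∫ u in Ioi y, (y ^ (α - 1))⁻¹ * (u ^ (α - 1) * Real.exp (-(u ^ α / α))) := by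
            refine setIntegral_mono_on (fd_intIoi hα y) hIone measurableSet_Ioi hmono
        _ = (y ^ (α - 1))⁻¹ * Real.exp (-(y ^ α / α)) := by
            rw [MeasureTheory.integral_const_mul, key_antideriv hα h1]
    have hpos : (0:ℝ) < y ^ (α - 1) := Real.rpow_pos_of_pos hy0 _
    calc (y ^ (α - 1) + 1) * (∫ u in Ioi y, Real.exp (-(|u| ^ α / α)))
        ≤ (y ^ (α - 1) + 1) * ((y ^ (α - 1))⁻¹ * Real.exp (-(y ^ α / α))) := by
          have hnn : 0 ≤ y ^ (α - 1) + 1 := by positivity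
          exact mul_le_mul_of_nonneg_left hstep hnn
      _ ≤ 2 * Real.exp (-(y ^ α / α)) := by
          have h2 : (y ^ (α - 1) + 1) * (y ^ (α - 1))⁻¹ ≤ 2 := by
            rw [add_mul, mul_inv_cancel₀ (ne_of_gt hpos)]
            have : (y ^ (α - 1))⁻¹ ≤ 1 := by
              rw [inv_le_one_iff₀]; right; exact hyp
            linarith
          calc (y ^ (α - 1) + 1) * ((y ^ (α - 1))⁻¹ * Real.exp (-(y ^ α / α)))
              = ((y ^ (α - 1) + 1) * (y ^ (α - 1))⁻¹) * Real.exp (-(y ^ α / α)) := by ring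
            _ ≤ 2 * Real.exp (-(y ^ α / α)) := by
                exact mul_le_mul_of_nonneg_right h2 (Real.exp_pos _).le
      _ ≤ (2 + 2 * Z' * Real.exp α⁻¹) * Real.exp (-(y ^ α / α)) := by
          have : (0:ℝ) ≤ 2 * Z' * Real.exp α⁻¹ := by positivity
          nlinarith [Real.exp_pos (-(y ^ α / α))]
  · -- 0 ≤ y < 1
    have hy1 : y ^ (α - 1) ≤ 1 := Real.rpow_le_one hy h1.le (by linarith)
    have hIle : (∫ u in Ioi y, Real.exp (-(|u| ^ α / α))) ≤ Z' := by
      rw [hZ']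
      exact setIntegral_le_integral (fd_int hα)
        (Filter.Eventually.of_forall fun x => (Real.exp_pos _).le)
    have hInn : (0:ℝ) ≤ ∫ u in Ioi y, Real.exp (-(|u| ^ α / α)) :=
      setIntegral_nonneg measurableSet_Ioi fun x _ => (Real.exp_pos _).le
    have hexp : (1:ℝ) ≤ Real.exp α⁻¹ * Real.exp (-(y ^ α / α)) := by
      rw [← Real.exp_add]
      refine Real.one_le_exp ?_
      have hya : y ^ α ≤ 1 := Real.rpow_le_one hy h1.le hα0.le
      have : y ^ α / α ≤ α⁻¹ := by
        rw [div_le_iff₀ hα0, inv_mul_cancel₀ (ne_of_gt hα0)]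
        exact hya
      linarith
    calc (y ^ (α - 1) + 1) * (∫ u in Ioi y, Real.exp (-(|u| ^ α / α)))
        ≤ 2 * Z' := by nlinarith
      _ = (2 * Z') * 1 := by ring
      _ ≤ (2 * Z' * Real.exp α⁻¹) * Real.exp (-(y ^ α / α)) := by
          rw [mul_assoc (2 * Z')]
          exact mul_le_mul_of_nonneg_left hexp (by positivity)
      _ ≤ (2 + 2 * Z' * Real.exp α⁻¹) * Real.exp (-(y ^ α / α)) := by
          nlinarith [Real.exp_pos (-(y ^ α / α))]

end Stmt13Aux

open Stmt13Aux in
/-- Lemma 3.3: bound on the derivative of the monotone rearrangement sending the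
symmetric exponential measure onto `dμ = Z⁻¹e^{−|x|^α/α}dx`, `α > 1`. -/
theorem stmt_13
    (α : ℝ) (hα : 1 < α)
    (Z : ℝ) (hZ : Z = ∫ x : ℝ, Real.exp (-(|x| ^ α / α)))
    (μ ν : Measure ℝ)
    (hμd : μ = volume.withDensity fun x => ENNReal.ofReal (Real.exp (-(|x| ^ α / α)) / Z))
    (hνd : ν = volume.withDensity fun x => ENNReal.ofReal (1 / 2 * Real.exp (-|x|)))
    (t t' tinv : ℝ → ℝ) (htmono : Monotone t)
    (htmap : Measure.map t ν = μ)
    (hderiv : ∀ x, HasDerivAt t (t' x) x)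
    (hlinv : Function.LeftInverse tinv t) (hrinv : Function.RightInverse tinv t) :
    ∃ Cα : ℝ, 0 < Cα ∧
      ∀ x : ℝ, |t' (tinv x)| ≤ Cα / (|x| ^ (α - 1) + 1) := by
  have hα0 : (0:ℝ) < α := by linarith
  set f : ℝ → ℝ := fun x => Real.exp (-(|x| ^ α / α)) with hf
  set g : ℝ → ℝ := fun x => 1 / 2 * Real.exp (-|x|) with hg
  have hf_pos : ∀ x, 0 < f x := fun x => Real.exp_pos _
  have hf_int : Integrable f := fd_int hα
  have hg_int : Integrable g := gd_int
  have hZpos : 0 < Z := by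
    rw [hZ]
    rw [integral_pos_iff_support_of_nonneg (fun x => (hf_pos x).le) hf_int]
    have : Function.support f = Set.univ := by
      ext x; simp [Function.support, (hf_pos x).ne']
    rw [this]
    simp
  have hfZ_int : Integrable (fun x => f x / Z) := hf_int.div_const Z
  have hfZ_cont : Continuous (fun x => f x / Z) := (fd_cont hα).div_const Z
  -- CDFs
  set H : ℝ → ℝ := fun y => ∫ u in Set.Iic y, f u / Z with hH
  set G : ℝ → ℝ := fun s => ∫ u in Set.Iic s, g u with hG
  have ht_cont : Continuous t := continuous_iff_continuousAt.mpr fun x => (hderiv x).continuousAt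
  have ht_sm : StrictMono t := htmono.strictMono_of_injective hlinv.injective
  have hGH : ∀ s, G s = H (t s) := by
    intro s
    have hmeas : μ (Set.Iic (t s)) = ν (Set.Iic s) := by
      rw [← htmap, Measure.map_apply ht_cont.measurable measurableSet_Iic]
      congr 1
      ext u
      simp [ht_sm.le_iff_le]
    rw [hμd, hνd] at hmeas
    rw [wd_Iic (fun x => div_nonneg (hf_pos x).le hZpos.le) hfZ_int] at hmeas
    rw [wd_Iic gd_nonneg hg_int] at hmeas
    have h1 : (0:ℝ) ≤ ∫ u in Set.Iic (t s), f u / Z :=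
      setIntegral_nonneg measurableSet_Iic fun x _ => div_nonneg (hf_pos x).le hZpos.le
    have h2 : (0:ℝ) ≤ ∫ u in Set.Iic s, g u :=
      setIntegral_nonneg measurableSet_Iic fun x _ => gd_nonneg x
    exact ((ENNReal.ofReal_eq_ofReal_iff h1 h2).mp hmeas).symm
  have hH_deriv : ∀ y, HasDerivAt H (f y / Z) y :=
    fun y => hasDerivAt_integral_Iic hfZ_cont hfZ_int y
  have hG_deriv : ∀ s, HasDerivAt G (g s) s :=
    fun s => hasDerivAt_integral_Iic gd_cont hg_int s
  have hform : ∀ s, t' s = Z * g s / f (t s) := by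
    intro s
    have h1 : HasDerivAt (fun s => H (t s)) (f (t s) / Z * t' s) s :=
      (hH_deriv (t s)).comp s (hderiv s)
    have h2 : HasDerivAt (fun s => H (t s)) (g s) s := by
      have : G = fun s => H (t s) := funext hGH
      rw [← this]
      exact hG_deriv s
    have heq := h1.unique h2
    have hfz : f (t s) ≠ 0 := (hf_pos _).ne'
    field_simp at heq ⊢
    linarith
  have key : ∀ x, t' (tinv x) = Z * g (tinv x) / f x := by
    intro x
    rw [hform (tinv x), hrinv x]
  -- bound Z * g (tinv x) ≤ ∫_{Ioi |x|} f
  have hsplit : ∀ x : ℝ, (∫ u in Set.Iic x, f u) + (∫ u in Set.Ioi x, f u) = Z := by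
    intro x
    have h := integral_add_compl (measurableSet_Iic (a := x)) hf_int
    rw [Set.compl_Iic] at h
    rw [h, hZ]
  have hHx : ∀ x : ℝ, Z * H x = ∫ u in Set.Iic x, f u := by
    intro x
    rw [hH]
    simp only
    rw [integral_div]
    field_simp
  have hmain : ∀ x : ℝ, Z * g (tinv x) ≤ ∫ u in Set.Ioi |x|, f u := by
    intro x
    have hGs : G (tinv x) = H x := by rw [hGH (tinv x), hrinv x]
    rcases le_total 0 x with hx | hx
    · rw [abs_of_nonneg hx]
      have h1 : g (tinv x) ≤ ∫ u in Set.Ioi (tinv x), g u := gd_le_Ioi (tinv x)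
      have h2 : (∫ u in Set.Ioi (tinv x), g u) = 1 - G (tinv x) := by
        have h := integral_add_compl (measurableSet_Iic (a := tinv x)) hg_int
        rw [Set.compl_Iic] at h
        rw [gd_total] at h
        rw [hG]
        simp only
        linarith [h]
      have h3 : g (tinv x) ≤ 1 - H x := by rw [← hGs]; linarith
      have h4 : Z * (1 - H x) = ∫ u in Set.Ioi x, f u := by
        have := hHx x
        have := hsplit x
        ring_nf
        nlinarith [hHx x, hsplit x]
      calc Z * g (tinv x) ≤ Z * (1 - H x) :=
            mul_le_mul_of_nonneg_left h3 hZpos.le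
        _ = ∫ u in Set.Ioi x, f u := h4
    · rw [abs_of_nonpos hx]
      have h1 : g (tinv x) ≤ G (tinv x) := gd_le_Iic (tinv x)
      have h3 : g (tinv x) ≤ H x := by rw [← hGs]; exact h1
      have h4 : Z * H x = ∫ u in Set.Ioi (-x), f u := by
        rw [hHx x, ← integral_Iic_neg (fd_even (α := α)) (-x), neg_neg]
      calc Z * g (tinv x) ≤ Z * H x := mul_le_mul_of_nonneg_left h3 hZpos.le
        _ = ∫ u in Set.Ioi (-x), f u := h4
  -- tail bound
  obtain ⟨C, hCpos, hC⟩ := tail_bound hα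
  refine ⟨C, hCpos, fun x => ?_⟩
  have hdenom : (0:ℝ) < |x| ^ (α - 1) + 1 := by positivity
  have hnn : 0 ≤ t' (tinv x) := by
    rw [key x]
    exact div_nonneg (mul_nonneg hZpos.le (gd_nonneg _)) (hf_pos x).le
  rw [abs_of_nonneg hnn, key x, div_le_div_iff₀ (hf_pos x) hdenom]
  have htail := hC |x| (abs_nonneg x)
  have hfx : f x = Real.exp (-(|x| ^ α / α)) := rfl
  have hfxy : f x = Real.exp (-(|x| ^ α / α)) := rfl
  calc Z * g (tinv x) * (|x| ^ (α - 1) + 1)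
      ≤ (∫ u in Set.Ioi |x|, f u) * (|x| ^ (α - 1) + 1) :=
        mul_le_mul_of_nonneg_right (hmain x) hdenom.le
    _ ≤ C * f x := by
        rw [mul_comm]
        have : Real.exp (-(|x| ^ α / α)) = f x := rfl
        calc (|x| ^ (α - 1) + 1) * ∫ u in Set.Ioi |x|, f u
            ≤ C * Real.exp (-(|x| ^ α / α)) := by
              have h := htail
              simpa [hf, abs_abs] using h
          _ = C * f x := rfl
end
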